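/- There exist constants c > 0 and C such that for every integer k ≥ 2 and every n divisible by k with n ≥ C·k⁴, every binary search tree T on [n] satisfies F^{k−1}_T(S_k) ≥ c·(n/k)·log₂(n/k), where S_k is the tilted-grid sequence of length n. -/

import Mathlib

/-- Binary trees with node labels of type `α`. -/
inductive BTree (α : Type) : Type where
  | leaf : BTree α
  | node : BTree α → α → BTree α → BTree α

namespace BTree

variable {α : Type} [LinearOrder α]

/-- The set of keys (node labels) of a binary tree. -/
def keys : BTree α → Finset α
  | .leaf => ∅
  | .node l x r => insert x (keys l ∪ keys r)

/-- The binary-search-tree property: every node's label is greater than all labels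
in its left subtree and smaller than all labels in its right subtree. -/
def IsBST : BTree α → Prop
  | .leaf => True
  | .node l x r => (∀ y ∈ keys l, y < x) ∧ (∀ y ∈ keys r, x < y) ∧ IsBST l ∧ IsBST r

/-- Depth (edge-distance from the root) of the node labeled `a` in a BST. -/
def depth : BTree α → α → ℕ
  | .leaf, _ => 0
  | .node l x r, a => if a = x then 0 else if a < x then depth l a + 1 else depth r a + 1

/-- Edge-distance between the nodes labeled `a` and `b` in a BST. -/
def dist : BTree α → α → α → ℕ
  | .leaf, _, _ => 0
  | .node l x r, a, b =>
      if a = b then 0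
      else if a < x ∧ b < x then dist l a b
      else if x < a ∧ x < b then dist r a b
      else depth (node l x r) a + depth (node l x r) b

/-- The key at the root, if any. -/
def root? : BTree α → Option α
  | .leaf => none
  | .node _ x _ => some x

end BTree

/-- `fingerPos X f init i t` is the position of finger `i` just before (0-indexed) time `t`:
the initial position `init i` if finger `i` has served no access so far, and otherwise
the last key it served. Here `f s` is the finger serving the access `X s`. -/
def fingerPos {α : Type} {k : ℕ} (X : ℕ → α) (f : ℕ → Fin k) (init : Fin k → α)
    (i : Fin k) : ℕ → α
  | 0 => init i
  | t + 1 => if f t = i then X t else fingerPos X f init i t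

/-- The cost of the `k`-finger strategy `(f, init)` serving the accesses
`X 0, …, X (m-1)` in the tree `T`: at each time we pay `1` plus the distance
travelled by the serving finger. -/
def fingerCost {α : Type} [LinearOrder α] (T : BTree α) (k m : ℕ) (X : ℕ → α)
    (f : ℕ → Fin k) (init : Fin k → α) : ℕ :=
  ∑ t ∈ Finset.range m, (1 + T.dist (fingerPos X f init (f t) t) (X t))

/-- `F^k_T(X)`: the optimal cost of serving `X 0, …, X (m-1)` in `T` with `k` fingers. -/
noncomputable def fingerOpt {α : Type} [LinearOrder α] (T : BTree α) (k m : ℕ)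
    (X : ℕ → α) : ℕ :=
  sInf {c : ℕ | ∃ (f : ℕ → Fin k) (init : Fin k → α), fingerCost T k m X f init = c}

/-- The tilted-grid sequence `S_k ∈ [k·l]^{k·l}` (1-indexed):
`S_k((p−1)k + b) = (b−1)·l + p` for `p ∈ {1,…,l}` and `b ∈ {1,…,k}`. -/
def tiltedGrid (k l : ℕ) (t : ℕ) : ℕ := ((t - 1) % k) * l + (t - 1) / k + 1


open Finset

namespace BTree

theorem dist_comm (T : BTree ℕ) (a b : ℕ) : T.dist a b = T.dist b a := by
  induction T with
  | leaf => rfl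
  | node l x r ihl ihr =>
    simp only [dist]
    by_cases hab : a = b
    · simp [hab]
    · have : ¬ b = a := fun h => hab h.symm
      simp only [hab, this, if_false]
      by_cases h1 : a < x ∧ b < x
      · simp [h1, h1.2, h1.1, ihl]
      · have h1' : ¬ (b < x ∧ a < x) := fun h => h1 ⟨h.2, h.1⟩
        simp only [h1, h1', if_false]
        by_cases h2 : x < a ∧ x < b
        · simp [h2, h2.2, h2.1, ihr]
        · have h2' : ¬ (x < b ∧ x < a) := fun h => h2 ⟨h.2, h.1⟩
          simp only [h2, h2', if_false]
          omega


theorem depth_node_lt {l r : BTree ℕ} {x a : ℕ} (h : a < x) :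
    (BTree.node l x r).depth a = l.depth a + 1 := by
  have hne : a ≠ x := by omega
  simp [depth, hne, h]

theorem depth_node_gt {l r : BTree ℕ} {x a : ℕ} (h : x < a) :
    (BTree.node l x r).depth a = r.depth a + 1 := by
  have hne : a ≠ x := by omega
  have h2 : ¬ a < x := by omega
  simp [depth, hne, h2]

theorem mem_keys_left {l r : BTree ℕ} {x a : ℕ} (hb : (node l x r).IsBST)
    (ha : a ∈ (node l x r).keys) (hax : a < x) : a ∈ l.keys := by
  obtain ⟨h1, h2, _, _⟩ := hb
  simp only [keys, mem_insert, mem_union] at ha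
  rcases ha with h | h | h
  · omega
  · exact h
  · exact absurd (h2 a h) (by omega)

theorem mem_keys_right {l r : BTree ℕ} {x a : ℕ} (hb : (node l x r).IsBST)
    (ha : a ∈ (node l x r).keys) (hax : x < a) : a ∈ r.keys := by
  obtain ⟨h1, h2, _, _⟩ := hb
  simp only [keys, mem_insert, mem_union] at ha
  rcases ha with h | h | h
  · omega
  · exact absurd (h1 a h) (by omega)
  · exact h

theorem keys_nonempty_of_mem {T : BTree ℕ} {a : ℕ} (h : a ∈ T.keys) :
    ∃ l x r, T = node l x r := by
  cases T with
  | leaf => simp [keys] at h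
  | node l x r => exact ⟨l, x, r, rfl⟩

/-- counting: number of keys at depth ≤ D is < 2^(D+1). -/
theorem card_depth_le (T : BTree ℕ) (hb : T.IsBST) (D : ℕ) :
    (T.keys.filter (fun a => T.depth a ≤ D)).card ≤ 2 ^ (D + 1) - 1 := by
  induction T generalizing D with
  | leaf => simp [keys]
  | node l x r ihl ihr =>
    obtain ⟨h1, h2, hbl, hbr⟩ := hb
    have hsub : (BTree.node l x r).keys.filter (fun a => (BTree.node l x r).depth a ≤ D) ⊆
        insert x ((l.keys.filter (fun a => l.depth a + 1 ≤ D)) ∪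
          (r.keys.filter (fun a => r.depth a + 1 ≤ D))) := by
      intro a ha
      simp only [mem_filter, keys, mem_insert, mem_union] at ha ⊢
      obtain ⟨hmem, hd⟩ := ha
      rcases hmem with h | h | h
      · exact Or.inl h
      · refine Or.inr (Or.inl ⟨h, ?_⟩)
        rw [depth_node_lt (h1 a h)] at hd; exact hd
      · refine Or.inr (Or.inr ⟨h, ?_⟩)
        rw [depth_node_gt (h2 a h)] at hd; exact hd
    rcases Nat.eq_zero_or_pos D with hD | hD
    · subst hD
      have hl0 : l.keys.filter (fun a => l.depth a + 1 ≤ 0) = ∅ := by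
        apply Finset.filter_false_of_mem; intro a _; omega
      have hr0 : r.keys.filter (fun a => r.depth a + 1 ≤ 0) = ∅ := by
        apply Finset.filter_false_of_mem; intro a _; omega
      rw [hl0, hr0] at hsub
      simp only [Finset.union_empty, Finset.empty_union] at hsub
      calc _ ≤ ({x} : Finset ℕ).card := card_le_card (by simpa using hsub)
        _ ≤ 2 ^ (0+1) - 1 := by simp
    · have hle : ∀ (s : BTree ℕ), (s.keys.filter (fun a => s.depth a + 1 ≤ D)) =
          (s.keys.filter (fun a => s.depth a ≤ D - 1)) := by
        intro s; apply Finset.filter_congr; intro a _; omega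
      have hcard : ((BTree.node l x r).keys.filter (fun a => (BTree.node l x r).depth a ≤ D)).card ≤
          1 + ((l.keys.filter (fun a => l.depth a ≤ D - 1)).card +
               (r.keys.filter (fun a => r.depth a ≤ D - 1)).card) := by
        refine (card_le_card hsub).trans ?_
        refine (Finset.card_insert_le _ _).trans ?_
        rw [hle l, hle r] at *
        have := Finset.card_union_le (l.keys.filter (fun a => l.depth a ≤ D - 1))
          (r.keys.filter (fun a => r.depth a ≤ D - 1))
        omega
      have hl := ihl hbl (D - 1)
      have hr := ihr hbr (D - 1)
      have hDe : D - 1 + 1 = D := by omega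
      rw [hDe] at hl hr
      have hpow : (2:ℕ) ^ (D + 1) = 2 ^ D + 2 ^ D := by ring
      have h1p : 1 ≤ (2:ℕ) ^ D := Nat.one_le_two_pow
      omega

/-- depth-sum lower bound -/
theorem sum_depth_ge (T : BTree ℕ) (hb : T.IsBST) (S : Finset ℕ) (hS : S ⊆ T.keys) (t : ℕ) :
    t * S.card ≤ (∑ a ∈ S, T.depth a) + 2 ^ (t + 1) := by
  have key : ∀ t : ℕ, t * S.card ≤ (∑ a ∈ S, min (T.depth a) t) + 2 ^ (t + 1) := by
    intro t
    induction t with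
    | zero => simp
    | succ t ih =>
      have hsplit : ∀ a : ℕ, min (T.depth a) (t+1) =
          min (T.depth a) t + (if t < T.depth a then 1 else 0) := by
        intro a
        rcases le_or_gt (T.depth a) t with h | h
        · simp [Nat.min_eq_left h, Nat.min_eq_left (h.trans (Nat.le_succ t)), Nat.not_lt.mpr h]
        · simp [Nat.min_eq_right (Nat.le_of_lt h), Nat.min_eq_right h, h]
      have hsum : (∑ a ∈ S, min (T.depth a) (t+1)) =
          (∑ a ∈ S, min (T.depth a) t) + (S.filter (fun a => t < T.depth a)).card := by
        rw [Finset.card_filter, ← Finset.sum_add_distrib]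
        exact Finset.sum_congr rfl (fun a _ => hsplit a)
      have h1 : (S.filter (fun a => T.depth a ≤ t)).card ≤ 2^(t+1) - 1 := by
        refine le_trans (card_le_card ?_) (card_depth_le T hb t)
        intro a ha
        simp only [mem_filter] at ha ⊢
        exact ⟨hS ha.1, ha.2⟩
      have hfe : S.filter (fun a => ¬ T.depth a ≤ t) = S.filter (fun a => t < T.depth a) := by
        apply Finset.filter_congr; intro a _; simp
      have h2 : (S.filter (fun a => T.depth a ≤ t)).card +
          (S.filter (fun a => t < T.depth a)).card = S.card := by
        rw [← hfe]
        exact Finset.card_filter_add_card_filter_not (p := fun a => T.depth a ≤ t)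
      have hpow : (2:ℕ) ^ (t+1+1) = 2^(t+1) + 2^(t+1) := by ring
      have hone : 1 ≤ (2:ℕ)^(t+1) := Nat.one_le_two_pow
      have hmul : (t+1) * S.card = t * S.card + S.card := by ring
      omega
  refine (key t).trans ?_
  gcongr with a ha
  exact Nat.min_le_left _ _

end BTree

namespace BTree

/-- Number of nodes on the path from the root towards the "cut" between `c` and `c+1`
whose subtree (as a key interval) contains `a`. -/
def chainCount (c : ℕ) : BTree ℕ → ℕ → ℕ
  | .leaf, _ => 0
  | .node l x r, a =>
      1 + (if x ≤ c then (if x < a then chainCount c r a else 0)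
           else (if a < x then chainCount c l a else 0))

theorem chainCount_node_pos (c : ℕ) (l : BTree ℕ) (x : ℕ) (r : BTree ℕ) (a : ℕ) :
    1 ≤ chainCount c (BTree.node l x r) a := by
  simp only [chainCount]; omega

theorem chainCount_le_depth (c : ℕ) (T : BTree ℕ) (a : ℕ) :
    chainCount c T a ≤ T.depth a + 1 := by
  induction T with
  | leaf => simp [chainCount]
  | node l x r ihl ihr =>
    simp only [chainCount]
    by_cases hx : x ≤ c
    · by_cases hxa : x < a
      · rw [depth_node_gt hxa, if_pos hx, if_pos hxa]; omega
      · rw [if_pos hx, if_neg hxa]; omega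
    · by_cases hax : a < x
      · rw [depth_node_lt hax, if_neg hx, if_pos hax]; omega
      · rw [if_neg hx, if_neg hax]; omega

theorem dist_node_split {l r : BTree ℕ} {x u v : ℕ} (huv : u ≠ v)
    (h1 : ¬ (u < x ∧ v < x)) (h2 : ¬ (x < u ∧ x < v)) :
    (BTree.node l x r).dist u v =
      (BTree.node l x r).depth u + (BTree.node l x r).depth v := by
  simp only [dist, if_neg huv, if_neg h1, if_neg h2]

theorem dist_node_left {l r : BTree ℕ} {x u v : ℕ} (hu : u < x) (hv : v < x) :
    (BTree.node l x r).dist u v = l.dist u v := by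
  by_cases huv : u = v
  · subst huv
    have h0 : ∀ (s : BTree ℕ), s.dist u u = 0 := by
      intro s; cases s <;> simp [dist]
    rw [h0, h0]
  · simp only [dist, if_neg huv, if_pos (⟨hu, hv⟩ : u < x ∧ v < x)]

theorem dist_node_right {l r : BTree ℕ} {x u v : ℕ} (hu : x < u) (hv : x < v) :
    (BTree.node l x r).dist u v = r.dist u v := by
  by_cases huv : u = v
  · subst huv
    have h0 : ∀ (s : BTree ℕ), s.dist u u = 0 := by
      intro s; cases s <;> simp [dist]
    rw [h0, h0]
  · have h1 : ¬ (u < x ∧ v < x) := by omega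
    simp only [dist, if_neg huv, if_neg h1, if_pos (⟨hu, hv⟩ : x < u ∧ x < v)]

theorem chainCount_dist₁ (c : ℕ) (T : BTree ℕ) (u v : ℕ) (hu : u ≤ c) (hv : c < v) :
    chainCount c T v ≤ T.dist u v + chainCount c T u := by
  induction T with
  | leaf => simp [chainCount]
  | node l x r ihl ihr =>
    have huv : u ≠ v := by omega
    by_cases hx : x ≤ c
    · have hxv : x < v := by omega
      have hEv : chainCount c (BTree.node l x r) v = 1 + chainCount c r v := by
        simp only [chainCount, if_pos hx, if_pos hxv]
      by_cases hxu : x < u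
      · have hEu : chainCount c (BTree.node l x r) u = 1 + chainCount c r u := by
          simp only [chainCount, if_pos hx, if_pos hxu]
        rw [dist_node_right hxu hxv, hEv, hEu]
        have := ihr; omega
      · have hEu : chainCount c (BTree.node l x r) u = 1 := by
          simp only [chainCount, if_pos hx, if_neg hxu]
        have hd : (BTree.node l x r).dist u v =
            (BTree.node l x r).depth u + (BTree.node l x r).depth v := by
          apply dist_node_split huv
          · omega
          · omega
        have hdv : (BTree.node l x r).depth v = r.depth v + 1 := depth_node_gt hxv
        have hEv2 : chainCount c r v ≤ r.depth v + 1 := chainCount_le_depth c r v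
        omega
    · have hux : u < x := by omega
      have hEu : chainCount c (BTree.node l x r) u = 1 + chainCount c l u := by
        simp only [chainCount, if_neg hx, if_pos hux]
      by_cases hvx : v < x
      · have hEv : chainCount c (BTree.node l x r) v = 1 + chainCount c l v := by
          simp only [chainCount, if_neg hx, if_pos hvx]
        rw [dist_node_left hux hvx, hEv, hEu]
        have := ihl; omega
      · have hEv : chainCount c (BTree.node l x r) v = 1 := by
          simp only [chainCount, if_neg hx, if_neg hvx]
        have h1 : 1 ≤ chainCount c (BTree.node l x r) u := chainCount_node_pos _ _ _ _ _
        omega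

theorem chainCount_dist₂ (c : ℕ) (T : BTree ℕ) (u v : ℕ) (hu : u ≤ c) (hv : c < v) :
    chainCount c T u ≤ T.dist u v + chainCount c T v := by
  induction T with
  | leaf => simp [chainCount]
  | node l x r ihl ihr =>
    have huv : u ≠ v := by omega
    by_cases hx : x ≤ c
    · have hxv : x < v := by omega
      have hEv : chainCount c (BTree.node l x r) v = 1 + chainCount c r v := by
        simp only [chainCount, if_pos hx, if_pos hxv]
      by_cases hxu : x < u
      · have hEu : chainCount c (BTree.node l x r) u = 1 + chainCount c r u := by
          simp only [chainCount, if_pos hx, if_pos hxu]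
        rw [dist_node_right hxu hxv, hEv, hEu]
        have := ihr; omega
      · have hEu : chainCount c (BTree.node l x r) u = 1 := by
          simp only [chainCount, if_pos hx, if_neg hxu]
        have h1 : 1 ≤ chainCount c (BTree.node l x r) v := chainCount_node_pos _ _ _ _ _
        omega
    · have hux : u < x := by omega
      have hEu : chainCount c (BTree.node l x r) u = 1 + chainCount c l u := by
        simp only [chainCount, if_neg hx, if_pos hux]
      by_cases hvx : v < x
      · have hEv : chainCount c (BTree.node l x r) v = 1 + chainCount c l v := by
          simp only [chainCount, if_neg hx, if_pos hvx]
        rw [dist_node_left hux hvx, hEv, hEu]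
        have := ihl; omega
      · have hEv : chainCount c (BTree.node l x r) v = 1 := by
          simp only [chainCount, if_neg hx, if_neg hvx]
        have hd : (BTree.node l x r).dist u v =
            (BTree.node l x r).depth u + (BTree.node l x r).depth v := by
          apply dist_node_split huv
          · omega
          · omega
        have hdu : (BTree.node l x r).depth u = l.depth u + 1 := depth_node_lt hux
        have hEu2 : chainCount c l u ≤ l.depth u + 1 := chainCount_le_depth c l u
        omega

theorem chainCount_mono (c : ℕ) (T : BTree ℕ) {a a' : ℕ} (h : a ≤ a') (h' : a' ≤ c) :
    chainCount c T a ≤ chainCount c T a' := by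
  induction T with
  | leaf => simp [chainCount]
  | node l x r ihl ihr =>
    by_cases hx : x ≤ c
    · by_cases hxa : x < a
      · have hxa' : x < a' := by omega
        simp only [chainCount, if_pos hx, if_pos hxa, if_pos hxa']
        omega
      · simp only [chainCount, if_pos hx, if_neg hxa]
        split <;> omega
    · have ha : a < x := by omega
      have ha' : a' < x := by omega
      simp only [chainCount, if_neg hx, if_pos ha, if_pos ha']
      omega

theorem chainCount_anti (c : ℕ) (T : BTree ℕ) {b b' : ℕ} (h : c < b) (h' : b ≤ b') :
    chainCount c T b' ≤ chainCount c T b := by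
  induction T with
  | leaf => simp [chainCount]
  | node l x r ihl ihr =>
    by_cases hx : x ≤ c
    · have hb : x < b := by omega
      have hb' : x < b' := by omega
      simp only [chainCount, if_pos hx, if_pos hb, if_pos hb']
      omega
    · by_cases hbx : b' < x
      · have hb : b < x := by omega
        simp only [chainCount, if_neg hx, if_pos hbx, if_pos hb]
        omega
      · simp only [chainCount, if_neg hx, if_neg hbx]
        split <;> omega

end BTree

namespace BTree

theorem fiber_bound (T : BTree ℕ) (hb : T.IsBST) (c t : ℕ) (g : ℕ) (P : Finset ℕ)
    (u v : ℕ → ℕ)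
    (hmem : ∀ p ∈ P, u p ∈ T.keys ∧ v p ∈ T.keys ∧ u p ≤ c ∧ c < v p)
    (hg : ∀ p ∈ P, min (chainCount c T (u p)) (chainCount c T (v p)) = g)
    (huinj : Set.InjOn u P) (hvinj : Set.InjOn v P) :
    t * P.card ≤ (∑ p ∈ P, T.dist (u p) (v p)) + 2 ^ (t + 1) := by
  induction T generalizing g with
  | leaf =>
    have hP : P = ∅ := by
      by_contra h
      obtain ⟨p, hp⟩ := Finset.nonempty_of_ne_empty h
      exact absurd (hmem p hp).1 (by simp [keys])
    subst hP; simp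
  | node l x r ihl ihr =>
    obtain ⟨hkl, hkr, hbl, hbr⟩ := hb
    by_cases hx : x ≤ c
    · -- chain goes right
      have hvkeys : ∀ p ∈ P, v p ∈ r.keys := by
        intro p hp
        exact mem_keys_right ⟨hkl, hkr, hbl, hbr⟩ (hmem p hp).2.1 (by have := (hmem p hp).2.2.2; omega)
      have hbeta2 : ∀ p ∈ P, 2 ≤ chainCount c (BTree.node l x r) (v p) := by
        intro p hp
        obtain ⟨l2, y, r2, hre⟩ := keys_nonempty_of_mem (hvkeys p hp)
        have hxv : x < v p := by have := (hmem p hp).2.2.2; omega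
        simp only [chainCount, if_pos hx, if_pos hxv]
        rw [hre]
        have := chainCount_node_pos c l2 y r2 (v p)
        omega
      by_cases hex : ∃ p ∈ P, u p ≤ x
      · -- all pairs separate here; g = 1
        obtain ⟨p₀, hp₀, hup₀⟩ := hex
        have hg1 : g = 1 := by
          have := hg p₀ hp₀
          have hα : chainCount c (BTree.node l x r) (u p₀) = 1 := by
            simp only [chainCount, if_pos hx, if_neg (by omega : ¬ x < u p₀)]
          have hβ := hbeta2 p₀ hp₀
          omega
        have hall : ∀ p ∈ P, u p ≤ x := by
          intro p hp
          by_contra hcon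
          have hxu : x < u p := by omega
          have hukeys : u p ∈ r.keys :=
            mem_keys_right ⟨hkl, hkr, hbl, hbr⟩ (hmem p hp).1 hxu
          obtain ⟨l2, y, r2, hre⟩ := keys_nonempty_of_mem hukeys
          have hα : 2 ≤ chainCount c (BTree.node l x r) (u p) := by
            simp only [chainCount, if_pos hx, if_pos hxu]
            rw [hre]
            have := chainCount_node_pos c l2 y r2 (u p)
            omega
          have := hg p hp
          have := hbeta2 p hp
          omega
        -- dist = depth u + depth v ≥ depth u
        have hdist : ∀ p ∈ P, (BTree.node l x r).depth (u p) ≤ (BTree.node l x r).dist (u p) (v p) := by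
          intro p hp
          have h1 : u p ≠ v p := by
            have ha := (hmem p hp).2.2.1
            have hb := (hmem p hp).2.2.2
            omega
          have hn1 : ¬ (u p < x ∧ v p < x) := by
            have := (hmem p hp).2.2.2; omega
          have hn2 : ¬ (x < u p ∧ x < v p) := by
            have := hall p hp; omega
          have hd := dist_node_split (l := l) (r := r) h1 hn1 hn2
          omega
        have hsum : (∑ a ∈ P.image u, (BTree.node l x r).depth a) ≤
            ∑ p ∈ P, (BTree.node l x r).dist (u p) (v p) := by
          rw [Finset.sum_image (fun p hp q hq h => huinj hp hq h)]
          exact Finset.sum_le_sum hdist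
        have hcard : (P.image u).card = P.card := Finset.card_image_of_injOn huinj
        have hS : P.image u ⊆ (BTree.node l x r).keys := by
          intro a ha
          obtain ⟨p, hp, hpa⟩ := Finset.mem_image.mp ha
          exact hpa ▸ (hmem p hp).1
        have hds := sum_depth_ge (BTree.node l x r) ⟨hkl, hkr, hbl, hbr⟩ (P.image u) hS t
        rw [hcard] at hds
        omega
      · -- all pairs go right
        push_neg at hex
        have hxu : ∀ p ∈ P, x < u p := fun p hp => by have := hex p hp; omega
        have hdist : ∀ p ∈ P, (BTree.node l x r).dist (u p) (v p) = r.dist (u p) (v p) := by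
          intro p hp
          exact dist_node_right (hxu p hp) (by have := (hmem p hp).2.2.2; omega)
        have hmem' : ∀ p ∈ P, u p ∈ r.keys ∧ v p ∈ r.keys ∧ u p ≤ c ∧ c < v p := by
          intro p hp
          exact ⟨mem_keys_right ⟨hkl, hkr, hbl, hbr⟩ (hmem p hp).1 (hxu p hp),
            hvkeys p hp, (hmem p hp).2.2.1, (hmem p hp).2.2.2⟩
        have hg' : ∀ p ∈ P, min (chainCount c r (u p)) (chainCount c r (v p)) = g - 1 := by
          intro p hp
          have h1 : chainCount c (BTree.node l x r) (u p) = 1 + chainCount c r (u p) := by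
            simp only [chainCount, if_pos hx, if_pos (hxu p hp)]
          have h2 : chainCount c (BTree.node l x r) (v p) = 1 + chainCount c r (v p) := by
            simp only [chainCount, if_pos hx, if_pos (by have := (hmem p hp).2.2.2; omega : x < v p)]
          have := hg p hp
          omega
        have := ihr hbr (g - 1) hmem' hg'
        calc t * P.card ≤ (∑ p ∈ P, r.dist (u p) (v p)) + 2 ^ (t+1) := this
          _ = (∑ p ∈ P, (BTree.node l x r).dist (u p) (v p)) + 2 ^ (t+1) := by
            congr 1
            exact (Finset.sum_congr rfl (fun p hp => (hdist p hp))).symm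
    · -- chain goes left, c < x
      have hcx : c < x := by omega
      have hukeys : ∀ p ∈ P, u p ∈ l.keys := by
        intro p hp
        exact mem_keys_left ⟨hkl, hkr, hbl, hbr⟩ (hmem p hp).1 (by have := (hmem p hp).2.2.1; omega)
      have halpha2 : ∀ p ∈ P, 2 ≤ chainCount c (BTree.node l x r) (u p) := by
        intro p hp
        obtain ⟨l2, y, r2, hle⟩ := keys_nonempty_of_mem (hukeys p hp)
        have hux : u p < x := by have := (hmem p hp).2.2.1; omega
        simp only [chainCount, if_neg hx, if_pos hux]
        rw [hle]
        have := chainCount_node_pos c l2 y r2 (u p)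
        omega
      by_cases hex : ∃ p ∈ P, x ≤ v p
      · obtain ⟨p₀, hp₀, hvp₀⟩ := hex
        have hg1 : g = 1 := by
          have := hg p₀ hp₀
          have hβ : chainCount c (BTree.node l x r) (v p₀) = 1 := by
            simp only [chainCount, if_neg hx, if_neg (by omega : ¬ v p₀ < x)]
          have hα := halpha2 p₀ hp₀
          omega
        have hall : ∀ p ∈ P, x ≤ v p := by
          intro p hp
          by_contra hcon
          have hvx : v p < x := by omega
          have hvkeys : v p ∈ l.keys :=
            mem_keys_left ⟨hkl, hkr, hbl, hbr⟩ (hmem p hp).2.1 hvx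
          obtain ⟨l2, y, r2, hle⟩ := keys_nonempty_of_mem hvkeys
          have hβ : 2 ≤ chainCount c (BTree.node l x r) (v p) := by
            simp only [chainCount, if_neg hx, if_pos hvx]
            rw [hle]
            have := chainCount_node_pos c l2 y r2 (v p)
            omega
          have := hg p hp
          have := halpha2 p hp
          omega
        have hdist : ∀ p ∈ P, (BTree.node l x r).depth (v p) ≤ (BTree.node l x r).dist (u p) (v p) := by
          intro p hp
          have h1 : u p ≠ v p := by
            have ha := (hmem p hp).2.2.1
            have hb := (hmem p hp).2.2.2
            omega
          have hn1 : ¬ (u p < x ∧ v p < x) := by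
            have := hall p hp; omega
          have hn2 : ¬ (x < u p ∧ x < v p) := by
            have := (hmem p hp).2.2.1; omega
          have hd := dist_node_split (l := l) (r := r) h1 hn1 hn2
          omega
        have hsum : (∑ a ∈ P.image v, (BTree.node l x r).depth a) ≤
            ∑ p ∈ P, (BTree.node l x r).dist (u p) (v p) := by
          rw [Finset.sum_image (fun p hp q hq h => hvinj hp hq h)]
          exact Finset.sum_le_sum hdist
        have hcard : (P.image v).card = P.card := Finset.card_image_of_injOn hvinj
        have hS : P.image v ⊆ (BTree.node l x r).keys := by
          intro a ha
          obtain ⟨p, hp, hpa⟩ := Finset.mem_image.mp ha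
          exact hpa ▸ (hmem p hp).2.1
        have hds := sum_depth_ge (BTree.node l x r) ⟨hkl, hkr, hbl, hbr⟩ (P.image v) hS t
        rw [hcard] at hds
        omega
      · push_neg at hex
        have hvx : ∀ p ∈ P, v p < x := fun p hp => by have := hex p hp; omega
        have hdist : ∀ p ∈ P, (BTree.node l x r).dist (u p) (v p) = l.dist (u p) (v p) := by
          intro p hp
          exact dist_node_left (by have := (hmem p hp).2.2.1; omega) (hvx p hp)
        have hmem' : ∀ p ∈ P, u p ∈ l.keys ∧ v p ∈ l.keys ∧ u p ≤ c ∧ c < v p := by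
          intro p hp
          exact ⟨hukeys p hp,
            mem_keys_left ⟨hkl, hkr, hbl, hbr⟩ (hmem p hp).2.1 (hvx p hp),
            (hmem p hp).2.2.1, (hmem p hp).2.2.2⟩
        have hg' : ∀ p ∈ P, min (chainCount c l (u p)) (chainCount c l (v p)) = g - 1 := by
          intro p hp
          have h1 : chainCount c (BTree.node l x r) (u p) = 1 + chainCount c l (u p) := by
            simp only [chainCount, if_neg hx, if_pos (by have := (hmem p hp).2.2.1; omega : u p < x)]
          have h2 : chainCount c (BTree.node l x r) (v p) = 1 + chainCount c l (v p) := by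
            simp only [chainCount, if_neg hx, if_pos (hvx p hp)]
          have := hg p hp
          omega
        have := ihl hbl (g - 1) hmem' hg'
        calc t * P.card ≤ (∑ p ∈ P, l.dist (u p) (v p)) + 2 ^ (t+1) := this
          _ = (∑ p ∈ P, (BTree.node l x r).dist (u p) (v p)) + 2 ^ (t+1) := by
            congr 1
            exact (Finset.sum_congr rfl (fun p hp => (hdist p hp))).symm

end BTree

namespace BTree

theorem le_two_pow_half_add (L : ℕ) : 8 * L + 12 ≤ 2 ^ (L / 2 + 5) := by
  have h1 : L / 2 + 1 ≤ 2 ^ (L / 2) := Nat.lt_two_pow_self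
  have h2 : 2 ^ (L / 2 + 5) = 32 * 2 ^ (L / 2) := by ring
  omega

theorem class_bound (T : BTree ℕ) (hb : T.IsBST) (c : ℕ) (P : Finset ℕ) (u v : ℕ → ℕ)
    (hmem : ∀ p ∈ P, u p ∈ T.keys ∧ v p ∈ T.keys ∧ u p ≤ c ∧ c < v p)
    (humono : ∀ p ∈ P, ∀ q ∈ P, p < q → u p < u q)
    (hvmono : ∀ p ∈ P, ∀ q ∈ P, p < q → v p < v q) :
    P.card * Nat.log 2 P.card ≤
      8 * (∑ p ∈ P, T.dist (u p) (v p)) + 64 * P.card := by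
  set m := P.card with hm
  set D := ∑ p ∈ P, T.dist (u p) (v p) with hD
  set L := Nat.log 2 m with hL
  set K := L + 1 with hK
  set α : ℕ → ℕ := fun p => chainCount c T (u p) with hα
  set β : ℕ → ℕ := fun p => chainCount c T (v p) with hβ
  set mn : ℕ → ℕ := fun p => min (α p) (β p) with hmn
  -- |α - β| ≤ dist
  have habs : ∀ p ∈ P, α p ≤ T.dist (u p) (v p) + β p ∧ β p ≤ T.dist (u p) (v p) + α p := by
    intro p hp
    obtain ⟨hu, hv, hcu, hcv⟩ := hmem p hp
    exact ⟨chainCount_dist₂ c T (u p) (v p) hcu hcv,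
           chainCount_dist₁ c T (u p) (v p) hcu hcv⟩
  have huinj : Set.InjOn u ↑P := by
    intro p hp q hq h
    simp only [Finset.mem_coe] at hp hq
    rcases lt_trichotomy p q with hlt | heq | hlt
    · exact absurd h (by have := humono p hp q hq hlt; omega)
    · exact heq
    · exact absurd h (by have := humono q hq p hp hlt; omega)
  have hvinj : Set.InjOn v ↑P := by
    intro p hp q hq h
    simp only [Finset.mem_coe] at hp hq
    rcases lt_trichotomy p q with hlt | heq | hlt
    · exact absurd h (by have := hvmono p hp q hq hlt; omega)
    · exact heq
    · exact absurd h (by have := hvmono q hq p hp hlt; omega)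
  set J : Finset ℕ := P.filter (fun p => α p ≤ β p + K ∧ β p ≤ α p + K) with hJ
  have hJP : J ⊆ P := Finset.filter_subset _ _
  rcases le_or_gt (2 * J.card) m with hcase | hcase
  · -- case A : many pairs with large |α-β|
    have hPJ : ∀ p ∈ P \ J, K + 1 ≤ T.dist (u p) (v p) := by
      intro p hp
      rw [Finset.mem_sdiff] at hp
      obtain ⟨hpP, hpJ⟩ := hp
      have h1 := habs p hpP
      have h2 : ¬ (α p ≤ β p + K ∧ β p ≤ α p + K) := by
        intro hcon
        exact hpJ (Finset.mem_filter.mpr ⟨hpP, hcon⟩)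
      omega
    have hsum : (K + 1) * (P \ J).card ≤ ∑ p ∈ P \ J, T.dist (u p) (v p) := by
      calc (K + 1) * (P \ J).card = (P \ J).card * (K+1) := by ring
        _ ≤ _ := Finset.card_nsmul_le_sum _ _ _ hPJ
    have hDge : ∑ p ∈ P \ J, T.dist (u p) (v p) ≤ D := by
      exact Finset.sum_le_sum_of_subset (Finset.sdiff_subset)
    have hcard : (P \ J).card = m - J.card := Finset.card_sdiff_of_subset hJP
    have hJle : J.card ≤ m := Finset.card_le_card hJP
    -- m * (K+1) ≤ 2 * (m - J.card) * (K+1) ≤ 2 D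
    have : m * (K + 1) ≤ 2 * ((K + 1) * (m - J.card)) := by
      have : m ≤ 2 * (m - J.card) := by omega
      calc m * (K+1) ≤ (2 * (m - J.card)) * (K+1) := Nat.mul_le_mul_right _ this
        _ = 2 * ((K + 1) * (m - J.card)) := by ring
    have hfin : m * (K + 1) ≤ 2 * D := by
      rw [hcard] at hsum
      omega
    have : m * L ≤ m * (K + 1) := Nat.mul_le_mul_left _ (by omega)
    omega
  · -- case B : many pairs with small |α-β|
    set cz : ℕ → ℤ := fun p => (α p : ℤ) - (β p : ℤ) with hcz
    set GJ : Finset ℕ := J.image mn with hGJ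
    -- representative of each fiber
    have hrep : ∀ g ∈ GJ, ∃ p, p ∈ J ∧ mn p = g := by
      intro g hg
      obtain ⟨p, hp, hpg⟩ := Finset.mem_image.mp hg
      exact ⟨p, hp, hpg⟩
    -- same cz value within J forces same fiber
    have hsame : ∀ p ∈ J, ∀ q ∈ J, cz p = cz q → mn p = mn q := by
      intro p hp q hq hpq
      have hpP : p ∈ P := hJP hp
      have hqP : q ∈ P := hJP hq
      rcases lt_trichotomy p q with hlt | heq | hlt
      · have h1 : u p < u q := humono p hpP q hqP hlt
        have h2 : v p < v q := hvmono p hpP q hqP hlt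
        have h3 : α p ≤ α q := chainCount_mono c T (le_of_lt h1) (hmem q hqP).2.2.1
        have h4 : β q ≤ β p := chainCount_anti c T (hmem p hpP).2.2.2 (le_of_lt h2)
        have heq2 : α p = α q ∧ β p = β q := by
          simp only [hcz] at hpq
          constructor <;> omega
        show min (α p) (β p) = min (α q) (β q)
        omega
      · rw [heq]
      · have h1 : u q < u p := humono q hqP p hpP hlt
        have h2 : v q < v p := hvmono q hqP p hpP hlt
        have h3 : α q ≤ α p := chainCount_mono c T (le_of_lt h1) (hmem p hpP).2.2.1
        have h4 : β p ≤ β q := chainCount_anti c T (hmem q hqP).2.2.2 (le_of_lt h2)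
        have heq2 : α p = α q ∧ β p = β q := by
          simp only [hcz] at hpq
          constructor <;> omega
        show min (α p) (β p) = min (α q) (β q)
        omega
    -- number of fibers meeting J
    have hGJcard : GJ.card ≤ 2 * K + 1 := by
      classical
      have hchoice : ∀ g ∈ GJ, ∃ p, p ∈ J ∧ mn p = g := hrep
      choose rep hrepJ hrepg using hchoice
      have hinj : Set.InjOn (fun g : GJ => cz (rep g g.2)) Set.univ := by
        intro g1 _ g2 _ h
        simp only at h
        have := hsame _ (hrepJ g1 g1.2) _ (hrepJ g2 g2.2) h
        rw [hrepg g1 g1.2, hrepg g2 g2.2] at this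
        exact Subtype.ext this
      -- map into Icc (-K) K
      have hmaps : ∀ g : GJ, cz (rep g g.2) ∈ Finset.Icc (-(K:ℤ)) (K:ℤ) := by
        intro g
        have hJ' := hrepJ g g.2
        rw [hJ, Finset.mem_filter] at hJ'
        simp only [Finset.mem_Icc, hcz]
        omega
      have : GJ.card = (Finset.univ : Finset GJ).card := by
        simp
      rw [this]
      have hle := Finset.card_le_card_of_injOn (s := (Finset.univ : Finset GJ))
        (t := Finset.Icc (-(K:ℤ)) (K:ℤ)) (fun g : GJ => cz (rep g g.2))
        (fun g _ => hmaps g) (by intro a ha b hb hh; exact hinj (Set.mem_univ a) (Set.mem_univ b) hh)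
      refine hle.trans ?_
      rw [Int.card_Icc]
      omega
    have hfibsum : ∀ (F : Finset ℕ) (f : ℕ → ℕ), F ⊆ P.image mn →
        (∑ g ∈ F, ∑ p ∈ P.filter (fun p => mn p = g), f p) ≤ ∑ p ∈ P, f p := by
      intro F f hF
      have h1 : (∑ g ∈ F, ∑ p ∈ P.filter (fun p => mn p = g), f p) ≤
          ∑ g ∈ P.image mn, ∑ p ∈ P.filter (fun p => mn p = g), f p :=
        Finset.sum_le_sum_of_subset hF
      have h2 : (∑ g ∈ P.image mn, ∑ p ∈ P.filter (fun p => mn p = g), f p) = ∑ p ∈ P, f p :=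
        Finset.sum_fiberwise_of_maps_to (fun p hp => Finset.mem_image_of_mem mn hp) f
      omega
    have hJsub : J.card ≤ ∑ g ∈ GJ, (P.filter (fun p => mn p = g)).card := by
      have : J ⊆ GJ.biUnion (fun g => P.filter (fun p => mn p = g)) := by
        intro p hp
        rw [Finset.mem_biUnion]
        exact ⟨mn p, Finset.mem_image_of_mem mn hp, Finset.mem_filter.mpr ⟨hJP hp, rfl⟩⟩
      calc J.card ≤ (GJ.biUnion (fun g => P.filter (fun p => mn p = g))).card :=
            Finset.card_le_card this
        _ ≤ ∑ g ∈ GJ, (P.filter (fun p => mn p = g)).card := Finset.card_biUnion_le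
    set S₀ : ℕ := m / (4 * (2 * K + 1)) + 1 with hS₀
    set big : Finset ℕ := GJ.filter (fun g => S₀ ≤ (P.filter (fun p => mn p = g)).card) with hbig
    have hsmall : ∑ g ∈ GJ \ big, (P.filter (fun p => mn p = g)).card ≤ (2 * K + 1) * (S₀ - 1) := by
      have h1 : ∀ g ∈ GJ \ big, (P.filter (fun p => mn p = g)).card ≤ S₀ - 1 := by
        intro g hg
        rw [Finset.mem_sdiff] at hg
        have : ¬ S₀ ≤ (P.filter (fun p => mn p = g)).card := by
          intro hcon
          exact hg.2 (Finset.mem_filter.mpr ⟨hg.1, hcon⟩)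
        omega
      calc ∑ g ∈ GJ \ big, (P.filter (fun p => mn p = g)).card ≤ (GJ \ big).card * (S₀ - 1) :=
            Finset.sum_le_card_nsmul _ _ _ h1
        _ ≤ (2 * K + 1) * (S₀ - 1) := by
            have : (GJ \ big).card ≤ GJ.card := Finset.card_le_card Finset.sdiff_subset
            exact Nat.mul_le_mul_right _ (by omega)
    have hquartbound : (2 * K + 1) * (S₀ - 1) ≤ m / 4 := by
      have h1 : S₀ - 1 = (m / 4) / (2 * K + 1) := by
        rw [hS₀]
        simp only [Nat.add_sub_cancel]
        rw [Nat.div_div_eq_div_mul]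
      rw [h1, mul_comm]
      exact Nat.div_mul_le_self _ _
    have hbigsum : m ≤ 4 * ∑ g ∈ big, (P.filter (fun p => mn p = g)).card := by
      have hsplit : ∑ g ∈ GJ \ big, (P.filter (fun p => mn p = g)).card + ∑ g ∈ big, (P.filter (fun p => mn p = g)).card = ∑ g ∈ GJ, (P.filter (fun p => mn p = g)).card :=
        Finset.sum_sdiff (Finset.filter_subset _ _)
      have hmd : 4 * (m / 4) ≤ m := by
        have := Nat.div_mul_le_self m 4
        omega
      omega
    set t₀ : ℕ := Nat.log 2 S₀ with ht₀
    have hfib : ∀ g ∈ big, t₀ * (P.filter (fun p => mn p = g)).card ≤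
        (∑ p ∈ P.filter (fun p => mn p = g), T.dist (u p) (v p)) + 2 * (P.filter (fun p => mn p = g)).card := by
      intro g hg
      rw [hbig, Finset.mem_filter] at hg
      have happ := fiber_bound T hb c t₀ g (P.filter (fun p => mn p = g)) u v
        (fun p hp => hmem p (Finset.mem_of_mem_filter p hp))
        (fun p hp => (Finset.mem_filter.mp hp).2)
        (huinj.mono (by intro p hp; exact Finset.mem_coe.mpr (Finset.mem_of_mem_filter p (Finset.mem_coe.mp hp))))
        (hvinj.mono (by intro p hp; exact Finset.mem_coe.mpr (Finset.mem_of_mem_filter p (Finset.mem_coe.mp hp))))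
      have hp2 : 2 ^ (t₀ + 1) ≤ 2 * (P.filter (fun p => mn p = g)).card := by
        have h1 : 2 ^ t₀ ≤ S₀ := Nat.pow_log_le_self 2 (by rw [hS₀]; exact Nat.succ_ne_zero _)
        have h2 : 2 ^ (t₀ + 1) = 2 * 2 ^ t₀ := by ring
        have := hg.2
        omega
      have happ' : t₀ * (P.filter (fun p => mn p = g)).card ≤
          (∑ p ∈ P.filter (fun p => mn p = g), T.dist (u p) (v p)) + 2 ^ (t₀ + 1) := happ
      omega
    have hbigD : ∑ g ∈ big, (∑ p ∈ P.filter (fun p => mn p = g), T.dist (u p) (v p)) ≤ D := by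
      apply hfibsum
      intro g hg
      have : g ∈ GJ := Finset.mem_of_mem_filter g hg
      rw [hGJ] at this
      obtain ⟨p, hp, hpg⟩ := Finset.mem_image.mp this
      exact Finset.mem_image.mpr ⟨p, hJP hp, hpg⟩
    have hbigsub : big ⊆ P.image mn := by
      intro g hg
      have : g ∈ GJ := Finset.mem_of_mem_filter g hg
      rw [hGJ] at this
      obtain ⟨p, hp, hpg⟩ := Finset.mem_image.mp this
      exact Finset.mem_image.mpr ⟨p, hJP hp, hpg⟩
    have hbign : ∑ g ∈ big, (P.filter (fun p => mn p = g)).card ≤ m := by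
      have h := hfibsum big (fun _ => 1) hbigsub
      calc ∑ g ∈ big, (P.filter (fun p => mn p = g)).card = ∑ g ∈ big, ∑ p ∈ P.filter (fun p => mn p = g), 1 := by
            apply Finset.sum_congr rfl; intro g _
            show (P.filter (fun p => mn p = g)).card = _
            rw [Finset.card_eq_sum_ones]
        _ ≤ ∑ p ∈ P, 1 := h
        _ = m := by rw [← Finset.card_eq_sum_ones]
    have hsumfib : t₀ * (∑ g ∈ big, (P.filter (fun p => mn p = g)).card) ≤ D + 2 * m := by
      calc t₀ * (∑ g ∈ big, (P.filter (fun p => mn p = g)).card) = ∑ g ∈ big, t₀ * (P.filter (fun p => mn p = g)).card := Finset.mul_sum _ _ _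
        _ ≤ ∑ g ∈ big, ((∑ p ∈ P.filter (fun p => mn p = g), T.dist (u p) (v p)) + 2 * (P.filter (fun p => mn p = g)).card) :=
            Finset.sum_le_sum hfib
        _ = (∑ g ∈ big, (∑ p ∈ P.filter (fun p => mn p = g), T.dist (u p) (v p)))
            + 2 * ∑ g ∈ big, (P.filter (fun p => mn p = g)).card := by rw [Finset.sum_add_distrib, Finset.mul_sum]
        _ ≤ D + 2 * m := by
            have := hbigD
            have h2 : 2 * ∑ g ∈ big, (P.filter (fun p => mn p = g)).card ≤ 2 * m := by omega
            omega
    have hmt : t₀ * m ≤ 4 * D + 8 * m := by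
      calc t₀ * m ≤ t₀ * (4 * ∑ g ∈ big, (P.filter (fun p => mn p = g)).card) := Nat.mul_le_mul_left _ hbigsum
        _ = 4 * (t₀ * (∑ g ∈ big, (P.filter (fun p => mn p = g)).card)) := by ring
        _ ≤ 4 * (D + 2 * m) := Nat.mul_le_mul_left _ hsumfib
        _ = 4 * D + 8 * m := by ring
    -- lower bound t₀ in terms of L
    set e : ℕ := Nat.log 2 (4 * (2 * K + 1)) + 1 with he
    have hepow : 4 * (2 * K + 1) ≤ 2 ^ e :=
      le_of_lt (Nat.lt_pow_succ_log_self (by norm_num) _)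
    have hm0 : 0 < m := by
      rcases Nat.eq_zero_or_pos m with h | h
      · exfalso
        have : J.card ≤ m := Finset.card_le_card hJP
        omega
      · exact h
    have hLt₀ : L ≤ t₀ + e := by
      rcases le_or_gt e L with hel | hel
      · have h1 : 2 ^ L ≤ m := Nat.pow_log_le_self 2 (by omega)
        have h2 : m / 2 ^ e ≤ m / (4 * (2 * K + 1)) :=
          Nat.div_le_div_left hepow (by omega)
        have h3 : 2 ^ L / 2 ^ e = 2 ^ (L - e) := Nat.pow_div hel (by norm_num)
        have h4 : 2 ^ L / 2 ^ e ≤ m / 2 ^ e := Nat.div_le_div_right h1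
        have h5 : 2 ^ (L - e) ≤ S₀ := by omega
        have h6 : L - e ≤ t₀ := by
          have := Nat.log_mono_right (b := 2) h5
          rwa [Nat.log_pow (by norm_num : 1 < 2)] at this
        omega
      · omega
    have hee : e ≤ L / 2 + 6 := by
      have h0 : 4 * (2 * K + 1) = 8 * L + 12 := by rw [hK]; ring
      have h1 : Nat.log 2 (4 * (2 * K + 1)) ≤ L / 2 + 5 := by
        rw [h0]
        have := Nat.log_mono_right (b := 2) (le_two_pow_half_add L)
        rwa [Nat.log_pow (by norm_num : 1 < 2)] at this
      omega
    have hL2 : L ≤ 2 * t₀ + 13 := by omega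
    have hmul : m * L ≤ m * (2 * t₀ + 13) := Nat.mul_le_mul_left _ hL2
    have heq : m * (2 * t₀ + 13) = 2 * (t₀ * m) + 13 * m := by ring
    omega

end BTree


theorem sum_range_mul_split (k l : ℕ) (g : ℕ → ℕ) :
    ∑ t ∈ Finset.range (k * l), g t = ∑ p ∈ Finset.range l, ∑ b ∈ Finset.range k, g (p * k + b) := by
  induction l with
  | zero => simp
  | succ l ih =>
    have h1 : k * (l + 1) = k * l + k := by ring
    rw [h1, Finset.sum_range_add, ih, Finset.sum_range_succ]
    congr 1
    apply Finset.sum_congr rfl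
    intro b _
    congr 1
    ring

theorem fingerPos_last {α : Type} {k : ℕ} (X : ℕ → α) (f : ℕ → Fin k) (init : Fin k → α)
    (i : Fin k) : ∀ t a, a < t → f a = i →
    ∃ s, a ≤ s ∧ s < t ∧ f s = i ∧ fingerPos X f init i t = X s := by
  intro t
  induction t with
  | zero => intro a ha _; omega
  | succ t ih =>
    intro a ha hfa
    by_cases hft : f t = i
    · exact ⟨t, by omega, by omega, hft, by simp [fingerPos, hft]⟩
    · have hat : a < t := by
        rcases Nat.lt_succ_iff_lt_or_eq.mp ha with h | h
        · exact h
        · exfalso; exact hft (h ▸ hfa)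
      obtain ⟨s, h1, h2, h3, h4⟩ := ih a hat hfa
      exact ⟨s, h1, by omega, h3, by simp [fingerPos, hft, h4]⟩

theorem tilted_access (k l p b : ℕ) (hk : 0 < k) (hb : b < k) :
    tiltedGrid k l (p * k + b + 1) = b * l + p + 1 := by
  unfold tiltedGrid
  have h0 : p * k + b + 1 - 1 = p * k + b := by omega
  rw [h0]
  have h1 : (p * k + b) % k = b := by
    have he : p * k + b = b + p * k := by ring
    rw [he, Nat.add_mul_mod_self_right, Nat.mod_eq_of_lt hb]
  have h2 : (p * k + b) / k = p := by
    have he : p * k + b = k * p + b := by ring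
    rw [he, Nat.mul_add_div hk]
    simp [Nat.div_eq_of_lt hb]
  rw [h1, h2]

theorem round_jump (T : BTree ℕ) (k l : ℕ) (hk : 2 ≤ k) (hl : 1 ≤ l)
    (f : ℕ → Fin (k - 1)) (init : Fin (k - 1) → ℕ) (p : ℕ) (hp : p < l) :
    ∃ q : ℕ × ℕ, q.1 < q.2 ∧ q.2 < k ∧
      T.dist (q.1 * l + p + 1) (q.2 * l + p + 1) ≤
        ∑ b ∈ Finset.range k,
          (1 + T.dist (fingerPos (fun t => tiltedGrid k l (t + 1)) f init (f (p * k + b)) (p * k + b))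
            ((fun t => tiltedGrid k l (t + 1)) (p * k + b))) := by
  set X : ℕ → ℕ := fun t => tiltedGrid k l (t + 1) with hX
  have hk0 : 0 < k := by omega
  have hXval : ∀ b, b < k → X (p * k + b) = b * l + p + 1 := by
    intro b hb
    rw [hX]
    exact tilted_access k l p b hk0 hb
  -- pigeonhole
  have hcard : (Finset.univ : Finset (Fin (k - 1))).card < (Finset.range k).card := by
    rw [Finset.card_univ, Fintype.card_fin, Finset.card_range]
    omega
  obtain ⟨b1, hb1, b2, hb2, hne, heq⟩ :=
    Finset.exists_ne_map_eq_of_card_lt_of_maps_to hcard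
      (f := fun b => f (p * k + b)) (fun b _ => Finset.mem_univ _)
  rw [Finset.mem_range] at hb1 hb2
  -- order them : a < b with equal finger
  obtain ⟨a, b, ha, hbk, hab, hfeq⟩ : ∃ a b : ℕ, a < b ∧ b < k ∧ a < b ∧
      f (p * k + a) = f (p * k + b) := by
    rcases lt_or_gt_of_ne hne with h | h
    · exact ⟨b1, b2, h, hb2, h, heq⟩
    · exact ⟨b2, b1, h, hb1, h, heq.symm⟩
  set i : Fin (k - 1) := f (p * k + b) with hi
  have hlast := fingerPos_last X f init i (p * k + b) (p * k + a)
    (by omega) hfeq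
  obtain ⟨s, hs1, hs2, hs3, hs4⟩ := hlast
  set bs : ℕ := s - p * k with hbs
  have hsval : s = p * k + bs := by omega
  have hbsk : bs < k := by omega
  have hbsne : bs ≠ b := by omega
  have hXs : X s = bs * l + p + 1 := by rw [hsval]; exact hXval bs hbsk
  have hXb : X (p * k + b) = b * l + p + 1 := hXval b hbk
  -- the cost term at time p*k+b dominates the jump
  have hterm : T.dist (X s) (X (p * k + b)) ≤
      ∑ c ∈ Finset.range k, (1 + T.dist (fingerPos X f init (f (p * k + c)) (p * k + c)) (X (p * k + c))) := by
    have hmem : b ∈ Finset.range k := Finset.mem_range.mpr hbk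
    have hsingle : 1 + T.dist (fingerPos X f init (f (p * k + b)) (p * k + b)) (X (p * k + b)) ≤
        ∑ c ∈ Finset.range k,
          (1 + T.dist (fingerPos X f init (f (p * k + c)) (p * k + c)) (X (p * k + c))) :=
      Finset.single_le_sum
        (f := fun c => 1 + T.dist (fingerPos X f init (f (p * k + c)) (p * k + c)) (X (p * k + c)))
        (fun c _ => Nat.zero_le _) hmem
    rw [← hi, hs4] at hsingle
    omega
  rcases lt_or_gt_of_ne hbsne with hlt | hgt
  · refine ⟨(bs, b), hlt, hbk, ?_⟩
    calc T.dist (bs * l + p + 1) (b * l + p + 1) = T.dist (X s) (X (p * k + b)) := by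
          rw [hXs, hXb]
      _ ≤ _ := hterm
  · refine ⟨(b, bs), hgt, hbsk, ?_⟩
    calc T.dist (b * l + p + 1) (bs * l + p + 1) = T.dist (X s) (X (p * k + b)) := by
          rw [hXs, hXb, BTree.dist_comm]
      _ ≤ _ := hterm


theorem nat_log_div_lower (a b : ℕ) (hb : 1 ≤ b) :
    Nat.log 2 a ≤ Nat.log 2 (a / b) + Nat.log 2 b + 1 := by
  set La := Nat.log 2 a with hLa
  set Lb := Nat.log 2 b with hLb
  rcases le_or_gt La (Lb + 1) with h | h
  · omega
  · rcases Nat.eq_zero_or_pos a with ha | ha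
    · subst ha; simp [hLa]
    have h1 : 2 ^ La ≤ a := Nat.pow_log_le_self 2 (by omega)
    have h2 : b < 2 ^ (Lb + 1) := Nat.lt_pow_succ_log_self (by norm_num) b
    have h3 : a / 2 ^ (Lb + 1) ≤ a / b := Nat.div_le_div_left (by omega) (by omega)
    have h4 : 2 ^ La / 2 ^ (Lb + 1) ≤ a / 2 ^ (Lb + 1) := Nat.div_le_div_right h1
    have h5 : 2 ^ La / 2 ^ (Lb + 1) = 2 ^ (La - (Lb + 1)) := Nat.pow_div (by omega) (by norm_num)
    have h6 : 2 ^ (La - (Lb + 1)) ≤ a / b := by omega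
    have h7 : La - (Lb + 1) ≤ Nat.log 2 (a / b) := by
      have := Nat.log_mono_right (b := 2) h6
      rwa [Nat.log_pow (by norm_num : 1 < 2)] at this
    omega

theorem main_nat_bound (k l : ℕ) (hk : 2 ≤ k) (hlk : 2 ^ 4000 * k ^ 3 ≤ l)
    (T : BTree ℕ) (hbst : T.IsBST) (hkeys : T.keys = Finset.Icc 1 (k * l))
    (f : ℕ → Fin (k - 1)) (init : Fin (k - 1) → ℕ) :
    l * Nat.log 2 l + 6000 * l ≤
      48 * fingerCost T (k - 1) (k * l) (fun t => tiltedGrid k l (t + 1)) f init := by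
  have hk0 : 0 < k := by omega
  have hl8 : 8 ≤ l := by
    have hp1 : (1:ℕ) ≤ 2 ^ 4000 := Nat.one_le_two_pow
    have hK3 : 8 ≤ k ^ 3 := by
      calc (8:ℕ) = 2 ^ 3 := by norm_num
        _ ≤ k ^ 3 := Nat.pow_le_pow_left hk 3
    calc (8:ℕ) = 1 * 8 := by norm_num
      _ ≤ 2 ^ 4000 * k ^ 3 := Nat.mul_le_mul hp1 hK3
      _ ≤ l := hlk
  set X : ℕ → ℕ := fun t => tiltedGrid k l (t + 1) with hXdef
  set FCc : ℕ := fingerCost T (k - 1) (k * l) X f init with hFCc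
  have hsplit : FCc = ∑ p ∈ Finset.range l, ∑ b ∈ Finset.range k,
      (1 + T.dist (fingerPos X f init (f (p * k + b)) (p * k + b)) (X (p * k + b))) := by
    rw [hFCc]
    rw [fingerCost]
    exact sum_range_mul_split k l _
  have hjump : ∀ p, p < l → ∃ q : ℕ × ℕ, q.1 < q.2 ∧ q.2 < k ∧
      T.dist (q.1 * l + p + 1) (q.2 * l + p + 1) ≤
        ∑ b ∈ Finset.range k,
          (1 + T.dist (fingerPos X f init (f (p * k + b)) (p * k + b)) (X (p * k + b))) := by
    intro p hp
    exact round_jump T k l hk (by omega) f init p hp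
  choose Q hQ using hjump
  set qm : ℕ → ℕ × ℕ := fun p => if h : p < l then Q p h else (0, 1) with hqm
  have hqm1 : ∀ p ∈ Finset.range l, (qm p).1 < (qm p).2 ∧ (qm p).2 < k ∧
      T.dist ((qm p).1 * l + p + 1) ((qm p).2 * l + p + 1) ≤
        ∑ b ∈ Finset.range k,
          (1 + T.dist (fingerPos X f init (f (p * k + b)) (p * k + b)) (X (p * k + b))) := by
    intro p hp
    rw [Finset.mem_range] at hp
    simp only [hqm, dif_pos hp]
    exact hQ p hp
  set Dall : ℕ := ∑ p ∈ Finset.range l, T.dist ((qm p).1 * l + p + 1) ((qm p).2 * l + p + 1)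
    with hDall
  have hD_FC : Dall ≤ FCc := by
    rw [hsplit, hDall]
    exact Finset.sum_le_sum (fun p hp => (hqm1 p hp).2.2)
  set QS : Finset (ℕ × ℕ) := (Finset.range k) ×ˢ (Finset.range k) with hQS
  have hmaps : ∀ p ∈ Finset.range l, qm p ∈ QS := by
    intro p hp
    have h := hqm1 p hp
    rw [hQS, Finset.mem_product]
    exact ⟨Finset.mem_range.mpr (by omega), Finset.mem_range.mpr h.2.1⟩
  have hfibD : ∑ q ∈ QS, ∑ p ∈ (Finset.range l).filter (fun p => qm p = q),
      T.dist ((qm p).1 * l + p + 1) ((qm p).2 * l + p + 1) = Dall :=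
    Finset.sum_fiberwise_of_maps_to hmaps _
  have hfibC : ∑ q ∈ QS, ((Finset.range l).filter (fun p => qm p = q)).card = l := by
    calc ∑ q ∈ QS, ((Finset.range l).filter (fun p => qm p = q)).card
        = ∑ q ∈ QS, ∑ p ∈ (Finset.range l).filter (fun p => qm p = q), 1 := by
          apply Finset.sum_congr rfl; intro q _; rw [Finset.card_eq_sum_ones]
      _ = ∑ p ∈ Finset.range l, 1 := Finset.sum_fiberwise_of_maps_to hmaps _
      _ = l := by simp
  have hclass : ∀ q ∈ QS,
      ((Finset.range l).filter (fun p => qm p = q)).card *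
        Nat.log 2 (((Finset.range l).filter (fun p => qm p = q)).card) ≤
      8 * (∑ p ∈ (Finset.range l).filter (fun p => qm p = q),
            T.dist ((qm p).1 * l + p + 1) ((qm p).2 * l + p + 1)) +
        64 * ((Finset.range l).filter (fun p => qm p = q)).card := by
    intro q hq
    have hPsub : ∀ p ∈ (Finset.range l).filter (fun p => qm p = q), p < l ∧ qm p = q := by
      intro p hp
      rw [Finset.mem_filter, Finset.mem_range] at hp
      exact hp
    have hsumeq : (∑ p ∈ (Finset.range l).filter (fun p => qm p = q),
        T.dist ((qm p).1 * l + p + 1) ((qm p).2 * l + p + 1)) =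
        ∑ p ∈ (Finset.range l).filter (fun p => qm p = q),
          T.dist (q.1 * l + p + 1) (q.2 * l + p + 1) := by
      apply Finset.sum_congr rfl
      intro p hp
      rw [(hPsub p hp).2]
    rw [hsumeq]
    refine BTree.class_bound T hbst ((q.1 + 1) * l)
      ((Finset.range l).filter (fun p => qm p = q))
      (fun p => q.1 * l + p + 1) (fun p => q.2 * l + p + 1) ?_ ?_ ?_
    · intro p hp
      obtain ⟨hpl, hpq⟩ := hPsub p hp
      have hq12 : q.1 < q.2 ∧ q.2 < k := by
        have h := hqm1 p (Finset.mem_range.mpr hpl)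
        rw [hpq] at h
        exact ⟨h.1, h.2.1⟩
      have hexp1 : (q.1 + 1) * l = q.1 * l + l := by ring
      have hmul1 : (q.1 + 1) * l ≤ k * l :=
        Nat.mul_le_mul_right l (by omega)
      have hmul2 : (q.2 + 1) * l ≤ k * l :=
        Nat.mul_le_mul_right l (by omega)
      have hexp2 : (q.2 + 1) * l = q.2 * l + l := by ring
      have hmul3 : (q.1 + 1) * l ≤ q.2 * l :=
        Nat.mul_le_mul_right l (by omega)
      refine ⟨?_, ?_, ?_, ?_⟩
      · rw [hkeys, Finset.mem_Icc]; omega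
      · rw [hkeys, Finset.mem_Icc]; omega
      · omega
      · omega
    · intro p _ p' _ hlt
      omega
    · intro p _ p' _ hlt
      omega
  have htot : ∑ q ∈ QS, ((Finset.range l).filter (fun p => qm p = q)).card *
      Nat.log 2 (((Finset.range l).filter (fun p => qm p = q)).card) ≤
      8 * Dall + 64 * l := by
    calc ∑ q ∈ QS, ((Finset.range l).filter (fun p => qm p = q)).card *
        Nat.log 2 (((Finset.range l).filter (fun p => qm p = q)).card)
        ≤ ∑ q ∈ QS, (8 * (∑ p ∈ (Finset.range l).filter (fun p => qm p = q),
            T.dist ((qm p).1 * l + p + 1) ((qm p).2 * l + p + 1)) +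
          64 * ((Finset.range l).filter (fun p => qm p = q)).card) :=
          Finset.sum_le_sum hclass
      _ = 8 * (∑ q ∈ QS, ∑ p ∈ (Finset.range l).filter (fun p => qm p = q),
            T.dist ((qm p).1 * l + p + 1) ((qm p).2 * l + p + 1)) +
          64 * ∑ q ∈ QS, ((Finset.range l).filter (fun p => qm p = q)).card := by
          rw [Finset.sum_add_distrib, Finset.mul_sum, Finset.mul_sum]
      _ = 8 * Dall + 64 * l := by rw [hfibD, hfibC]
  -- pigeonhole on classes
  set T₀ : ℕ := l / (2 * (k * k)) + 1 with hT₀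
  set bigq : Finset (ℕ × ℕ) :=
    QS.filter (fun q => T₀ ≤ ((Finset.range l).filter (fun p => qm p = q)).card) with hbigq
  have hQScard : QS.card = k * k := by
    rw [hQS, Finset.card_product, Finset.card_range]
  have hsmallq : ∑ q ∈ QS \ bigq, ((Finset.range l).filter (fun p => qm p = q)).card ≤
      (k * k) * (T₀ - 1) := by
    have h1 : ∀ q ∈ QS \ bigq, ((Finset.range l).filter (fun p => qm p = q)).card ≤ T₀ - 1 := by
      intro q hq
      rw [Finset.mem_sdiff] at hq
      have : ¬ T₀ ≤ ((Finset.range l).filter (fun p => qm p = q)).card := by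
        intro hcon
        exact hq.2 (Finset.mem_filter.mpr ⟨hq.1, hcon⟩)
      omega
    calc ∑ q ∈ QS \ bigq, ((Finset.range l).filter (fun p => qm p = q)).card
        ≤ (QS \ bigq).card * (T₀ - 1) := Finset.sum_le_card_nsmul _ _ _ h1
      _ ≤ (k * k) * (T₀ - 1) := by
          have : (QS \ bigq).card ≤ QS.card := Finset.card_le_card Finset.sdiff_subset
          exact Nat.mul_le_mul_right _ (by omega)
  have hT₀b : (k * k) * (T₀ - 1) ≤ l / 2 := by
    have h1 : T₀ - 1 = (l / 2) / (k * k) := by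
      rw [hT₀]
      simp only [Nat.add_sub_cancel]
      rw [Nat.div_div_eq_div_mul]
    rw [h1, mul_comm]
    exact Nat.div_mul_le_self _ _
  have hsum_split : ∑ q ∈ QS \ bigq, ((Finset.range l).filter (fun p => qm p = q)).card +
      ∑ q ∈ bigq, ((Finset.range l).filter (fun p => qm p = q)).card = l := by
    rw [Finset.sum_sdiff (Finset.filter_subset _ _)]
    exact hfibC
  have hbig_m : l ≤ 2 * ∑ q ∈ bigq, ((Finset.range l).filter (fun p => qm p = q)).card := by
    omega
  set Λ : ℕ := Nat.log 2 T₀ with hΛ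
  have hlower : (∑ q ∈ bigq, ((Finset.range l).filter (fun p => qm p = q)).card) * Λ ≤
      ∑ q ∈ QS, ((Finset.range l).filter (fun p => qm p = q)).card *
        Nat.log 2 (((Finset.range l).filter (fun p => qm p = q)).card) := by
    calc (∑ q ∈ bigq, ((Finset.range l).filter (fun p => qm p = q)).card) * Λ
        = ∑ q ∈ bigq, ((Finset.range l).filter (fun p => qm p = q)).card * Λ :=
          Finset.sum_mul _ _ _
      _ ≤ ∑ q ∈ bigq, ((Finset.range l).filter (fun p => qm p = q)).card *
            Nat.log 2 (((Finset.range l).filter (fun p => qm p = q)).card) := by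
          apply Finset.sum_le_sum
          intro q hq
          rw [hbigq, Finset.mem_filter] at hq
          exact Nat.mul_le_mul_left _ (Nat.log_mono_right hq.2)
      _ ≤ _ := Finset.sum_le_sum_of_subset (Finset.filter_subset _ _)
  have hkey1 : l * Λ ≤ 16 * FCc + 128 * l := by
    have h1 : l * Λ ≤ (2 * ∑ q ∈ bigq, ((Finset.range l).filter (fun p => qm p = q)).card) * Λ :=
      Nat.mul_le_mul_right Λ hbig_m
    have h2 : (2 * ∑ q ∈ bigq, ((Finset.range l).filter (fun p => qm p = q)).card) * Λ =
        2 * ((∑ q ∈ bigq, ((Finset.range l).filter (fun p => qm p = q)).card) * Λ) := by ring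
    have h3 := hlower.trans htot
    omega
  -- lower bound Λ
  set Ln : ℕ := Nat.log 2 l with hLn
  set Lk : ℕ := Nat.log 2 k with hLk
  have hlog_div : Ln ≤ Nat.log 2 (l / (2 * (k * k))) + Nat.log 2 (2 * (k * k)) + 1 :=
    nat_log_div_lower l (2 * (k * k)) (by
      have h1 : 0 < k * k := Nat.mul_pos hk0 hk0
      omega)
  have hΛ' : Nat.log 2 (l / (2 * (k * k))) ≤ Λ :=
    Nat.log_mono_right (by omega)
  have hlog2k : Nat.log 2 (2 * (k * k)) ≤ 2 * Lk + 3 := by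
    have h1 : k < 2 ^ (Lk + 1) := Nat.lt_pow_succ_log_self (by norm_num) k
    have h2 : 2 * (k * k) ≤ 2 ^ (2 * Lk + 3) := by
      have h3 : k * k ≤ 2 ^ (Lk + 1) * 2 ^ (Lk + 1) :=
        Nat.mul_le_mul (le_of_lt h1) (le_of_lt h1)
      have h4 : 2 ^ (Lk + 1) * 2 ^ (Lk + 1) = 2 ^ (2 * Lk + 2) := by
        rw [← pow_add]; congr 1; ring
      have h5 : 2 ^ (2 * Lk + 3) = 2 * 2 ^ (2 * Lk + 2) := by ring
      omega
    have := Nat.log_mono_right (b := 2) h2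
    rwa [Nat.log_pow (by norm_num : 1 < 2)] at this
  have hLn_lower : 4000 + 3 * Lk ≤ Ln := by
    have h1 : 2 ^ Lk ≤ k := Nat.pow_log_le_self 2 (by omega)
    have h2 : 2 ^ (4000 + 3 * Lk) ≤ l := by
      calc 2 ^ (4000 + 3 * Lk) = 2 ^ 4000 * (2 ^ Lk) ^ 3 := by
            rw [pow_add]; congr 1; rw [← pow_mul]; congr 1; ring
        _ ≤ 2 ^ 4000 * k ^ 3 := Nat.mul_le_mul_left _ (Nat.pow_le_pow_left h1 3)
        _ ≤ l := hlk
    have := Nat.log_mono_right (b := 2) h2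
    rwa [Nat.log_pow (by norm_num : 1 < 2)] at this
  have hΛbig : Ln + 7000 ≤ 3 * Λ := by omega
  -- combine
  have hfin1 : l * (Ln + 7000) ≤ l * (3 * Λ) := Nat.mul_le_mul_left l hΛbig
  have hfin2 : l * (3 * Λ) = 3 * (l * Λ) := by ring
  have hfin3 : l * (Ln + 7000) = l * Ln + 7000 * l := by ring
  omega

/-- There are constants `c > 0` and `C` such that for every `k ≥ 2` and
every `n = k·l` divisible by `k` with `n ≥ C·k⁴`, every BST `T` on `[n]` satisfies
`F^{k−1}_T(S_k) ≥ c·(n/k)·log₂(n/k)` (note `n/k = l`). -/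
theorem stmt11 : ∃ c : ℝ, 0 < c ∧ ∃ C : ℝ, ∀ k l : ℕ, 2 ≤ k →
    C * (k : ℝ) ^ 4 ≤ ((k * l : ℕ) : ℝ) →
    ∀ T : BTree ℕ, T.IsBST → T.keys = Finset.Icc 1 (k * l) →
      c * (l : ℝ) * Real.logb 2 (l : ℝ) ≤
        (fingerOpt T (k - 1) (k * l) (fun t => tiltedGrid k l (t + 1)) : ℝ) := by
  refine ⟨1/200, by norm_num, ((2:ℝ) ^ (4000:ℕ)), ?_⟩
  intro k l hk hC T hbst hkeys
  have hk0 : 0 < k := by omega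
  have hkR : (0:ℝ) < (k:ℝ) := by positivity
  have hC' : ((2:ℝ) ^ (4000:ℕ)) * (k:ℝ) ^ 4 ≤ (k:ℝ) * (l:ℝ) := by
    push_cast at hC
    linarith
  have hdiv : ((2:ℝ) ^ (4000:ℕ)) * (k:ℝ) ^ 3 ≤ (l:ℝ) := by
    have h4 : ((2:ℝ) ^ (4000:ℕ)) * (k:ℝ) ^ 4 = (k:ℝ) * (((2:ℝ) ^ (4000:ℕ)) * (k:ℝ) ^ 3) := by
      ring
    rw [h4] at hC'
    exact le_of_mul_le_mul_left hC' hkR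
  have hlk : 2 ^ 4000 * k ^ 3 ≤ l := by
    have hcast : ((2 ^ 4000 * k ^ 3 : ℕ) : ℝ) ≤ (l : ℝ) := by
      push_cast
      exact hdiv
    exact_mod_cast hcast
  have hl8 : 8 ≤ l := by
    have hp1 : (1:ℕ) ≤ 2 ^ 4000 := Nat.one_le_two_pow
    have hK3 : 8 ≤ k ^ 3 := by
      calc (8:ℕ) = 2 ^ 3 := by norm_num
        _ ≤ k ^ 3 := Nat.pow_le_pow_left hk 3
    calc (8:ℕ) = 1 * 8 := by norm_num
      _ ≤ 2 ^ 4000 * k ^ 3 := Nat.mul_le_mul hp1 hK3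
      _ ≤ l := hlk
  have hne : {c : ℕ | ∃ (f : ℕ → Fin (k-1)) (init : Fin (k-1) → ℕ),
      fingerCost T (k-1) (k*l) (fun t => tiltedGrid k l (t+1)) f init = c}.Nonempty := by
    refine ⟨fingerCost T (k-1) (k*l) (fun t => tiltedGrid k l (t+1))
      (fun _ => ⟨0, by omega⟩) (fun _ => 0), ?_⟩
    exact ⟨fun _ => ⟨0, by omega⟩, fun _ => 0, rfl⟩
  have hopt : fingerOpt T (k-1) (k*l) (fun t => tiltedGrid k l (t+1)) ∈
      {c : ℕ | ∃ (f : ℕ → Fin (k-1)) (init : Fin (k-1) → ℕ),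
        fingerCost T (k-1) (k*l) (fun t => tiltedGrid k l (t+1)) f init = c} :=
    Nat.sInf_mem hne
  obtain ⟨f, init, hcost⟩ := hopt
  have hmain := main_nat_bound k l hk hlk T hbst hkeys f init
  rw [hcost] at hmain
  have hFOR : (l:ℝ) * (Nat.log 2 l : ℝ) + 6000 * (l:ℝ) ≤
      48 * ((fingerOpt T (k-1) (k*l) (fun t => tiltedGrid k l (t+1)) : ℕ) : ℝ) := by
    exact_mod_cast hmain
  have hlR : (0:ℝ) < (l:ℝ) := by
    have : (0:ℕ) < l := by omega
    exact_mod_cast this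
  have hlogb : Real.logb 2 (l:ℝ) ≤ (Nat.log 2 l : ℝ) + 1 := by
    have h1 : (l:ℝ) ≤ (2:ℝ) ^ (Nat.log 2 l + 1) := by
      exact_mod_cast (Nat.lt_pow_succ_log_self (by norm_num) l).le
    have h2 : Real.logb 2 (l:ℝ) ≤ Real.logb 2 ((2:ℝ) ^ (Nat.log 2 l + 1)) :=
      Real.logb_le_logb_of_le (by norm_num) hlR h1
    have h3 : Real.logb 2 ((2:ℝ) ^ (Nat.log 2 l + 1)) = ((Nat.log 2 l : ℝ) + 1) := by
      rw [Real.logb_pow, Real.logb_self_eq_one (by norm_num)]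
      push_cast
      ring
    rw [h3] at h2
    exact h2
  have hmul : (l:ℝ) * Real.logb 2 (l:ℝ) ≤ (l:ℝ) * ((Nat.log 2 l : ℝ) + 1) :=
    mul_le_mul_of_nonneg_left hlogb (le_of_lt hlR)
  have hFO0 : (0:ℝ) ≤ ((fingerOpt T (k-1) (k*l) (fun t => tiltedGrid k l (t+1)) : ℕ) : ℝ) :=
    Nat.cast_nonneg _
  linarith [hmul, hFOR, hFO0, hlR]
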